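/- arXiv:2311.10965 — 4 statements merged into one kernel-verified Lean document; each statement's English description precedes it below -/
import Mathlib

section
/- Assume le is transitive and total. If qsp steps k l le = Some (l1, v, l2), then for every x in l2, le v x = true. -/
/-- `le` is transitive and total. -/
def le_props {X : Type} (le : X → X → Bool) : Prop :=
  (∀ a b c, le a b = true → le b c = true → le a c = true) ∧
  (∀ a b, le a b = true ∨ le b a = true)

/-- Fueled quickselect. -/
def qsp {X : Type} : Nat → Nat → List X → (X → X → Bool) → Option (List X × X × List X)
  | 0, _, _, _ => none
  | steps + 1, k, l, le =>
    match l with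
    | [] => none
    | pivot :: lst =>
      let sm := lst.filter (fun x => le x pivot && !le pivot x)
      let eq := lst.filter (fun x => le x pivot && le pivot x)
      let lg := lst.filter (fun x => !le x pivot)
      if k < sm.length then
        match qsp steps k sm le with
        | none => none
        | some (a, x, b) => some (a, x, b ++ ((pivot :: eq) ++ lg))
      else if sm.length + eq.length < k then
        match qsp steps (k - (sm.length + eq.length + 1)) lg le with
        | none => none
        | some (a, x, b) => some (a ++ (sm ++ (pivot :: eq)), x, b)
      else
        some (sm ++ eq.take (k - sm.length), pivot, eq.drop (k - sm.length) ++ lg)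

def quick_select {X : Type} (k : Nat) (l : List X) (le : X → X → Bool) :
    Option (List X × X × List X) :=
  qsp l.length k l le

/-- Data points are lists of naturals. -/
abbrev datapt : Type := List Nat

/-- k-d trees. -/
inductive kdtree : Type where
  | mt_tree : kdtree
  | node : Nat → datapt → kdtree → kdtree → kdtree

/-- Compare two data points on their `i`-th coordinate. -/
def ith_leb (i : Nat) (p q : datapt) : Bool := decide (p.getD i 0 ≤ q.getD i 0)

def median_partition (l : List datapt) (le : datapt → datapt → Bool) :
    Option (List datapt × datapt × List datapt) :=
  quick_select (l.length / 2) l le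

def next_depth (k d : Nat) : Nat := (d + 1) % k

def build_kdtree_ : Nat → Nat → List datapt → Nat → kdtree
  | 0, _, _, _ => .mt_tree
  | fuel + 1, k, data, depth_mod =>
    match data with
    | [] => .mt_tree
    | _ :: _ =>
      match median_partition data (ith_leb depth_mod) with
      | none => .mt_tree
      | some (sm, pvt, lg) =>
        .node depth_mod pvt
          (build_kdtree_ fuel k sm (next_depth k depth_mod))
          (build_kdtree_ fuel k lg (next_depth k depth_mod))

def build_kdtree (k : Nat) (data : List datapt) : kdtree :=
  build_kdtree_ data.length k data 0

/-- Bounding boxes: lower and upper bounds per coordinate (`none` = unbounded). -/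
structure bbox : Type where
  mins : List (Option Nat)
  maxs : List (Option Nat)

def list_set {A : Type} (l : List A) (d : Nat) (v : A) : List A := l.set d v

def bb_split (bb : bbox) (d : Nat) (v : Nat) : bbox × bbox :=
  (⟨bb.mins, list_set bb.maxs d (some v)⟩, ⟨list_set bb.mins d (some v), bb.maxs⟩)

/-- Coordinatewise containment of a point in a bounding box. -/
def bb_contains (bb : bbox) (pt : datapt) : Bool :=
  (List.range pt.length).all (fun i =>
    (match bb.mins.getD i none with
     | none => true
     | some s => decide (s ≤ pt.getD i 0)) &&
    (match bb.maxs.getD i none with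
     | none => true
     | some t => decide (pt.getD i 0 ≤ t)))

/-- Manhattan distance between two points (on naturals). -/
def sum_dist (q p : datapt) : Nat :=
  (List.zipWith (fun a b => (a - b) + (b - a)) q p).sum

/-- Closest enclosed point: clamp each coordinate of `vs` into the box. -/
def cep (vs : datapt) (mins maxs : List (Option Nat)) : datapt :=
  (List.range vs.length).map (fun i =>
    let v := vs.getD i 0
    let v1 := match maxs.getD i none with | none => v | some t => min v t
    match mins.getD i none with | none => v1 | some s => max s v1)

def kdtree_bounded : kdtree → bbox → Bool
  | .mt_tree, _ => true
  | .node ax pt lft rgt, bb =>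
    bb_contains bb pt &&
    kdtree_bounded lft (bb_split bb ax (pt.getD ax 0)).1 &&
    kdtree_bounded rgt (bb_split bb ax (pt.getD ax 0)).2

inductive In_kdtree : datapt → kdtree → Prop where
  | in_root : ∀ ax pt lft rgt, In_kdtree pt (.node ax pt lft rgt)
  | in_left : ∀ v ax pt lft rgt, In_kdtree v lft → In_kdtree v (.node ax pt lft rgt)
  | in_right : ∀ v ax pt lft rgt, In_kdtree v rgt → In_kdtree v (.node ax pt lft rgt)

inductive Contents_kdtree : kdtree → List datapt → Prop where
  | cmt : Contents_kdtree .mt_tree []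
  | cnode : ∀ ax pt lft rgt ll rl, Contents_kdtree lft ll → Contents_kdtree rgt rl →
      Contents_kdtree (.node ax pt lft rgt) (pt :: (ll ++ rl))

/- A (max-)priority queue of elements of `A` keyed by `key : A → Nat`,
   implemented as an unsorted list. -/
abbrev priqueue (A : Type) (_key : A → Nat) : Type := List A

def pq_empty (A : Type) (key : A → Nat) : priqueue A key := []

def pq_insert {A : Type} (key : A → Nat) (e : A) (pq : priqueue A key) : priqueue A key :=
  e :: pq

def pq_size {A : Type} {key : A → Nat} (pq : priqueue A key) : Nat := pq.length

/-- Remove (one) element of maximal key: returns it and the rest. -/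
def select_max {A : Type} (key : A → Nat) : A → List A → A × List A
  | x, [] => (x, [])
  | x, y :: ys =>
    if key y ≤ key x then
      let p := select_max key x ys
      (p.1, y :: p.2)
    else
      let p := select_max key y ys
      (p.1, x :: p.2)

def delete_max {A : Type} (key : A → Nat) : priqueue A key → Option (A × priqueue A key)
  | [] => none
  | x :: xs => some (select_max key x xs)

def peek_max {A : Type} (key : A → Nat) (pq : priqueue A key) : Option A :=
  (delete_max key pq).map Prod.fst

/-- Representation invariant (trivial for the list implementation). -/
def priq {A : Type} (key : A → Nat) (_pq : priqueue A key) : Prop := True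

/-- Abstraction relation between a priority queue and a list of its elements. -/
def PQAbs {A : Type} (key : A → Nat) (pq : priqueue A key) (l : List A) : Prop :=
  pq.Perm l

/-- Insert, but keep the queue size bounded by `K` (discarding a max element). -/
def insert_bounded {A : Type} (K : Nat) (key : A → Nat) (e : A) (pq : priqueue A key) :
    priqueue A key :=
  let updpq := pq_insert key e pq
  if K < pq_size updpq then
    match delete_max key updpq with
    | none => updpq
    | some (_, updpq') => updpq'
  else updpq

/-- K-nearest-neighbor search over a k-d tree with bounding-box pruning. -/
def knn (K k : Nat) : kdtree → bbox → datapt → priqueue datapt (fun _ => 0) → List datapt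
  | .mt_tree, _, _, pq => pq
  | .node ax pt lft rgt, bb, query, pq =>
    let prune : Bool :=
      match peek_max (sum_dist query) pq with
      | none => false
      | some top =>
        decide (K ≤ pq.length) &&
        decide (sum_dist query top < sum_dist query (cep query bb.mins bb.maxs))
    if prune then pq
    else
      let pq0 := insert_bounded K (sum_dist query) pt pq
      let bbs := bb_split bb ax (pt.getD ax 0)
      if ith_leb ax pt query then
        knn K k rgt bbs.2 query (knn K k lft bbs.1 query pq0)
      else
        knn K k lft bbs.1 query (knn K k rgt bbs.2 query pq0)

def knn_search (K k : Nat) (tree : kdtree) (query : datapt) : List datapt :=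
  knn K k tree ⟨List.replicate k none, List.replicate k none⟩ query []

/-- Every element of `l1` has key ≤ every element of `l2`. -/
def all_in_leb {A : Type} (key : A → Nat) (l1 l2 : List A) : Prop :=
  ∀ e1 ∈ l1, ∀ e2 ∈ l2, key e1 ≤ key e2

/-- Drop the first `n` elements of a list. -/
def dropn {A : Type} : Nat → List A → List A
  | 0, lst => lst
  | _ + 1, [] => []
  | n + 1, _ :: t => dropn n t
theorem qsp_v_mem {X : Type} (steps : Nat) : ∀ (k : Nat) (l : List X) (le : X → X → Bool)
    (l1 l2 : List X) (v : X), qsp steps k l le = some (l1, v, l2) → v ∈ l := by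
  induction steps with
  | zero => intro k l le l1 l2 v h; simp [qsp] at h
  | succ n ih =>
    intro k l le l1 l2 v h
    match l with
    | [] => simp [qsp] at h
    | pivot :: lst =>
      simp only [qsp] at h
      split at h
      · cases hq : qsp n k (lst.filter (fun x => le x pivot && !le pivot x)) le with
        | none => rw [hq] at h; simp at h
        | some p =>
          obtain ⟨a, x, b⟩ := p
          rw [hq] at h; simp at h
          obtain ⟨_, hv, _⟩ := h
          subst hv
          have := ih _ _ _ _ _ _ hq
          have := List.mem_of_mem_filter this
          exact List.mem_cons_of_mem _ this
      · split at h
        · cases hq : qsp n (k - ((lst.filter (fun x => le x pivot && !le pivot x)).length + (lst.filter (fun x => le x pivot && le pivot x)).length + 1)) (lst.filter (fun x => !le x pivot)) le with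
          | none => rw [hq] at h; simp at h
          | some p =>
            obtain ⟨a, x, b⟩ := p
            rw [hq] at h; simp at h
            obtain ⟨_, hv, _⟩ := h
            subst hv
            have := ih _ _ _ _ _ _ hq
            have := List.mem_of_mem_filter this
            exact List.mem_cons_of_mem _ this
        · simp at h
          obtain ⟨_, hv, _⟩ := h
          subst hv
          exact List.mem_cons_self

theorem qsp_all_larger {X : Type} (steps k : Nat) (l : List X) (le : X → X → Bool)
    (l1 l2 : List X) (v : X) (Hle : le_props le)
    (h : qsp steps k l le = some (l1, v, l2)) :
    ∀ x ∈ l2, le v x = true := by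
  obtain ⟨htrans, htot⟩ := Hle
  induction steps generalizing k l l1 l2 v with
  | zero => simp [qsp] at h
  | succ n ih =>
    match l with
    | [] => simp [qsp] at h
    | pivot :: lst =>
      simp only [qsp] at h
      split at h
      · cases hq : qsp n k (lst.filter (fun x => le x pivot && !le pivot x)) le with
        | none => rw [hq] at h; simp at h
        | some p =>
          obtain ⟨a, w, b⟩ := p
          rw [hq] at h; simp at h
          obtain ⟨h1, hv, h2⟩ := h
          subst hv; subst h2
          have hvmem := qsp_v_mem _ _ _ _ _ _ _ hq
          have hvp : le w pivot = true := by
            have := List.mem_filter.1 hvmem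
            simp at this
            exact this.2.1
          intro x hx
          simp at hx
          rcases hx with hx | hx | hx | hx
          · exact ih _ _ _ _ _ hq x hx
          · subst hx; exact hvp
          · exact htrans _ _ _ hvp hx.2.2
          · rcases htot x pivot with hh | hh
            · rw [hx.2] at hh; exact absurd hh (by simp)
            · exact htrans _ _ _ hvp hh
      · split at h
        · cases hq : qsp n (k - ((lst.filter (fun x => le x pivot && !le pivot x)).length + (lst.filter (fun x => le x pivot && le pivot x)).length + 1)) (lst.filter (fun x => !le x pivot)) le with
          | none => rw [hq] at h; simp at h
          | some p =>
            obtain ⟨a, w, b⟩ := p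
            rw [hq] at h; simp at h
            obtain ⟨h1, hv, h2⟩ := h
            subst hv; subst h2
            exact ih _ _ _ _ _ hq
        · simp at h
          obtain ⟨h1, hv, h2⟩ := h
          subst hv; subst h2
          intro x hx
          simp at hx
          rcases hx with hx | hx
          · have := List.mem_filter.1 (List.mem_of_mem_drop hx)
            simp at this
            exact this.2.2
          · rcases htot x pivot with hh | hh
            · rw [hx.2] at hh; exact absurd hh (by simp)
            · exact hh
end

section
/- If k < length l and length l ≤ steps, then there exists p such that qsp steps k l le = Some p (i.e., the fuel never runs out). -/
theorem qsp_filter_sum {X : Type} (le : X → X → Bool) (pivot : X) (lst : List X) :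
    (lst.filter (fun x => le x pivot && !le pivot x)).length +
    (lst.filter (fun x => le x pivot && le pivot x)).length +
    (lst.filter (fun x => !le x pivot)).length = lst.length := by
  induction lst with
  | nil => simp
  | cons h t iht =>
    simp only [List.filter_cons]
    cases hxp : le h pivot <;> cases hpx : le pivot h <;> simp <;> omega

theorem qsp_works {X : Type} (steps k : Nat) (l : List X) (le : X → X → Bool)
    (hk : k < l.length) (hsteps : l.length ≤ steps) :
    ∃ p, qsp steps k l le = some p := by
  induction steps generalizing k l with
  | zero => omega
  | succ n ih =>
    match l with
    | [] => simp at hk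
    | pivot :: lst =>
      have hsum := qsp_filter_sum le pivot lst
      set sm := lst.filter (fun x => le x pivot && !le pivot x) with hsm
      set eq := lst.filter (fun x => le x pivot && le pivot x) with heq
      set lg := lst.filter (fun x => !le x pivot) with hlg
      have hlen : lst.length ≤ n := by simp at hsteps; omega
      simp only [qsp]
      by_cases h1 : k < sm.length
      · obtain ⟨⟨a, x, b⟩, hp⟩ := ih k sm h1 (le_trans (List.length_filter_le _ _) hlen)
        rw [if_pos h1, hp]
        exact ⟨_, rfl⟩
      · rw [if_neg h1]
        by_cases h2 : sm.length + eq.length < k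
        · have hk' : k - (sm.length + eq.length + 1) < lg.length := by
            simp at hk; omega
          obtain ⟨⟨a, x, b⟩, hp⟩ := ih _ lg hk'
            (le_trans (List.length_filter_le _ _) hlen)
          rw [if_pos h2, hp]
          exact ⟨_, rfl⟩
        · rw [if_neg h2]
          exact ⟨_, rfl⟩
end

section
/- For any fuel f, dimension count k, data list, and depth index dmod, if 0 < k, dmod < k, and length data ≤ f, then there exists a list lst such that Contents_kdtree (build_kdtree_ f k data dmod) lst and data is a permutation of lst. -/
lemma perm_of_ms {X : Type} {l m : List X} (h : (l : Multiset X) = (m : Multiset X)) :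
    l.Perm m := Multiset.coe_eq_coe.mp h

lemma filt3_perm {X : Type} (le : X → X → Bool) (pivot : X) (lst : List X) :
    lst.Perm (lst.filter (fun x => le x pivot && !le pivot x) ++
      lst.filter (fun x => le x pivot && le pivot x) ++
      lst.filter (fun x => !le x pivot)) := by
  induction lst with
  | nil => simp
  | cons x t ih =>
    rw [← Multiset.coe_eq_coe] at *
    cases h1 : le x pivot <;> cases h2 : le pivot x <;>
      simp only [List.filter_cons, h1, h2, Bool.not_true, Bool.not_false,
        Bool.and_true, Bool.and_false, Bool.true_and, Bool.false_and,
        Bool.and_self, Bool.false_eq_true, if_true, if_false, ite_true, ite_false] <;>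
      simp only [← Multiset.coe_add, ← Multiset.cons_coe, Multiset.cons_add,
        Multiset.add_cons, ← Multiset.singleton_add] at * <;>
      rw [ih] <;> abel

lemma qsp_perm {X : Type} (le : X → X → Bool) :
    ∀ steps k (l : List X), l.length ≤ steps → k < l.length →
      ∃ a x b, qsp steps k l le = some (a, x, b) ∧ l.Perm (a ++ x :: b) := by
  intro steps
  induction steps with
  | zero => intro k l hl hk; omega
  | succ n ih =>
    intro k l hl hk
    match l with
    | [] => simp at hk
    | pivot :: lst =>
      have hp := filt3_perm le pivot lst
      set sm := lst.filter (fun x => le x pivot && !le pivot x) with hsm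
      set eq := lst.filter (fun x => le x pivot && le pivot x) with heq
      set lg := lst.filter (fun x => !le x pivot) with hlg
      have hlen : lst.length = sm.length + eq.length + lg.length := by
        have := hp.length_eq; simp at this; omega
      have hl' : lst.length ≤ n := by simpa using hl
      simp only [qsp]
      by_cases h1 : k < sm.length
      · obtain ⟨a, x, b, hq, hperm⟩ := ih k sm
          (le_trans (by omega : sm.length ≤ lst.length) hl') h1
        refine ⟨a, x, b ++ ((pivot :: eq) ++ lg), ?_, ?_⟩
        · simp only [← hsm, ← heq, ← hlg, if_pos h1, hq]
        · apply perm_of_ms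
          rw [← Multiset.coe_eq_coe] at hp hperm
          simp only [← Multiset.coe_add, ← Multiset.cons_coe, Multiset.cons_add,
            Multiset.add_cons, ← Multiset.singleton_add] at *
          rw [hp, hperm]; abel_nf
      · by_cases h2 : sm.length + eq.length < k
        · have hk2 : k < lst.length + 1 := by simpa using hk
          have hk' : k - (sm.length + eq.length + 1) < lg.length := by omega
          obtain ⟨a, x, b, hq, hperm⟩ :=
            ih (k - (sm.length + eq.length + 1)) lg
              (le_trans (by omega : lg.length ≤ lst.length) hl') hk'
          refine ⟨a ++ (sm ++ (pivot :: eq)), x, b, ?_, ?_⟩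
          · simp only [← hsm, ← heq, ← hlg, if_neg h1, if_pos h2, hq]
          · apply perm_of_ms
            rw [← Multiset.coe_eq_coe] at hp hperm
            simp only [← Multiset.coe_add, ← Multiset.cons_coe, Multiset.cons_add,
              Multiset.add_cons, ← Multiset.singleton_add] at *
            rw [hp, hperm]; abel_nf
        · refine ⟨sm ++ eq.take (k - sm.length), pivot,
            eq.drop (k - sm.length) ++ lg, ?_, ?_⟩
          · simp only [← hsm, ← heq, ← hlg, if_neg h1, if_neg h2]
          · apply perm_of_ms
            rw [← Multiset.coe_eq_coe] at hp
            have htd : eq.take (k - sm.length) ++ eq.drop (k - sm.length) = eq :=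
              List.take_append_drop _ _
            nth_rewrite 1 [← htd] at hp
            simp only [← Multiset.coe_add, ← Multiset.cons_coe, Multiset.cons_add,
              Multiset.add_cons, ← Multiset.singleton_add] at *
            rw [hp]; abel_nf

theorem build_kdtree_contents_perm_gen (fuel k : Nat) (data : List datapt)
    (depth_mod : Nat) (hk : 0 < k) (hd : depth_mod < k) (hf : data.length ≤ fuel) :
    ∃ lst, Contents_kdtree (build_kdtree_ fuel k data depth_mod) lst ∧
      data.Perm lst := by
  induction fuel generalizing data depth_mod with
  | zero =>
    have : data = [] := List.length_eq_zero_iff.mp (Nat.le_zero.mp hf)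
    subst this
    exact ⟨[], Contents_kdtree.cmt, List.Perm.refl _⟩
  | succ n ih =>
    cases data with
    | nil => exact ⟨[], Contents_kdtree.cmt, List.Perm.refl _⟩
    | cons d ds =>
      obtain ⟨a, x, b, hq, hperm⟩ := qsp_perm (ith_leb depth_mod)
        (d :: ds).length ((d :: ds).length / 2) (d :: ds) (le_refl _)
        (Nat.div_lt_self (by simp) (by omega))
      have hlen : (d :: ds).length = a.length + 1 + b.length := by
        have := hperm.length_eq; simp at this ⊢; omega
      have hfl : (d :: ds).length ≤ n + 1 := hf
      have hnd : next_depth k depth_mod < k := Nat.mod_lt _ hk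
      obtain ⟨la, hca, hpa⟩ := ih a (next_depth k depth_mod) hnd
        (by simp at hfl hlen; omega)
      obtain ⟨lb, hcb, hpb⟩ := ih b (next_depth k depth_mod) hnd
        (by simp at hfl hlen; omega)
      refine ⟨x :: (la ++ lb), ?_, ?_⟩
      · simp only [build_kdtree_, median_partition, quick_select, hq]
        exact Contents_kdtree.cnode _ _ _ _ _ _ hca hcb
      · apply perm_of_ms
        rw [← Multiset.coe_eq_coe] at hperm hpa hpb
        simp only [← Multiset.coe_add, ← Multiset.cons_coe, Multiset.cons_add,
          Multiset.add_cons, ← Multiset.singleton_add] at *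
        rw [hperm, hpa, hpb]; abel_nf
end

section
/- The KNN search result has the correct size: for K > 0, a nonempty data list of k-dimensional points with k > 0, the list result = knn_search K k (build_kdtree k data) query has length min K (length data). -/
/-- size of a kdtree -/
def tsize : kdtree → Nat
  | .mt_tree => 0
  | .node _ _ l r => 1 + tsize l + tsize r

lemma filter3_len {X : Type} (le : X → X → Bool) (p : X) (l : List X) :
    (l.filter (fun x => le x p && !le p x)).length +
    (l.filter (fun x => le x p && le p x)).length +
    (l.filter (fun x => !le x p)).length = l.length := by
  induction l with
  | nil => simp
  | cons a t ih =>
    simp only [List.filter_cons]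
    cases h1 : le a p <;> cases h2 : le p a <;> simp_all <;> omega

lemma qsp_spec {X : Type} : ∀ (steps k : Nat) (l : List X) (le : X → X → Bool),
    l.length ≤ steps → k < l.length →
    ∃ a x b, qsp steps k l le = some (a, x, b) ∧ a.length = k ∧
      l.length = a.length + b.length + 1 := by
  intro steps
  induction steps with
  | zero => intro k l le h hk; omega
  | succ n ih =>
    intro k l le h hk
    match l with
    | [] => simp at hk
    | pivot :: lst =>
      have h3 := filter3_len le pivot lst
      simp only [qsp]
      set sm := lst.filter (fun x => le x pivot && !le pivot x) with hsm
      set eq := lst.filter (fun x => le x pivot && le pivot x) with heq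
      set lg := lst.filter (fun x => !le x pivot) with hlg
      by_cases hc1 : k < sm.length
      · obtain ⟨a, x, b, hq, ha, hl⟩ := ih k sm le
          (by have := List.length_filter_le (fun x => le x pivot && !le pivot x) lst
              simp at h; omega) hc1
        refine ⟨a, x, b ++ ((pivot :: eq) ++ lg), ?_, ha, ?_⟩
        · simp [hc1, hq]
        · simp at h hl ⊢; omega
      · by_cases hc2 : sm.length + eq.length < k
        · obtain ⟨a, x, b, hq, ha, hl⟩ := ih (k - (sm.length + eq.length + 1)) lg le
            (by have := List.length_filter_le (fun x => !le x pivot) lst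
                simp at h; omega)
            (by simp at hk; omega)
          refine ⟨a ++ (sm ++ pivot :: eq), x, b, ?_, ?_, ?_⟩
          · simp [hc1, hc2, hq]
          · simp at hk ⊢; omega
          · simp at hl ⊢; omega
        · refine ⟨sm ++ eq.take (k - sm.length), pivot,
            eq.drop (k - sm.length) ++ lg, ?_, ?_, ?_⟩
          · simp [hc1, hc2]
          · simp; omega
          · simp; omega

lemma build_size : ∀ (fuel k : Nat) (data : List datapt) (d : Nat),
    data.length ≤ fuel → tsize (build_kdtree_ fuel k data d) = data.length := by
  intro fuel
  induction fuel with
  | zero => intro k data d h; interval_cases hl : data.length <;>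
      simp_all [build_kdtree_, tsize]
  | succ n ih =>
    intro k data d h
    match data with
    | [] => simp [build_kdtree_, tsize]
    | p :: rest =>
      have hlen : 0 < (p :: rest).length := by simp
      obtain ⟨a, x, b, hq, ha, hl⟩ := qsp_spec (p :: rest).length
        ((p :: rest).length / 2) (p :: rest) (ith_leb d)
        (le_refl _) (Nat.div_lt_self hlen (by norm_num))
      simp only [build_kdtree_, median_partition, quick_select, hq]
      rw [tsize, ih _ _ _ (by omega), ih _ _ _ (by omega)]
      omega

lemma select_max_len {A : Type} (key : A → Nat) :
    ∀ (ys : List A) (x : A), (select_max key x ys).2.length = ys.length := by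
  intro ys
  induction ys with
  | nil => intro x; simp [select_max]
  | cons y t ih =>
    intro x
    simp only [select_max]
    split <;> simp [ih]

lemma insert_bounded_len {A : Type} (K : Nat) (key : A → Nat) (e : A) (pq : priqueue A key) :
    (insert_bounded K key e pq).length =
      if pq.length < K then pq.length + 1 else pq.length := by
  simp only [insert_bounded, pq_insert, pq_size, List.length_cons, delete_max]
  have := select_max_len key pq e
  by_cases hlt : K < List.length pq + 1
  · simp only [hlt, ↓reduceIte]; rw [if_neg (by omega)]; omega
  · simp only [hlt, ↓reduceIte]; rw [if_pos (by omega)]; simp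

lemma min_fold (K a b : Nat) : min K (min K a + b) = min K (a + b) := by omega

lemma knn_len (K k : Nat) : ∀ (t : kdtree) (bb : bbox) (q : datapt)
    (pq : priqueue datapt (fun _ => 0)), pq.length ≤ K →
    (knn K k t bb q pq).length = min K (pq.length + tsize t) := by
  intro t
  induction t with
  | mt_tree => intro bb q pq h; simp [knn, tsize]; omega
  | node ax pt lft rgt ihl ihr =>
    intro bb q pq h
    simp only [knn]
    by_cases (match peek_max (sum_dist q) pq with
        | none => false
        | some top => decide (K ≤ pq.length) &&
            decide (sum_dist q top < sum_dist q (cep q bb.mins bb.maxs))) = true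
    · next hprune =>
      have hK : K ≤ pq.length := by
        by_contra hn
        cases hpk : peek_max (sum_dist q) pq with
        | none => simp [hpk] at hprune
        | some top =>
          simp [hpk] at hprune
          omega
      rw [if_pos hprune]; simp [tsize]; omega
    · next hprune =>
      have hpq0 : (insert_bounded K (sum_dist q) pt pq).length = min K (pq.length + 1) := by
        rw [insert_bounded_len, Nat.min_def]; split_ifs <;> omega
      have hle0 : (insert_bounded K (sum_dist q) pt pq).length ≤ K := by omega
      rw [if_neg hprune]
      split
      · rw [ihr, ihl _ _ _ hle0, hpq0, min_fold]
        · simp [tsize]; omega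
        · rw [ihl _ _ _ hle0]; omega
      · rw [ihl, ihr _ _ _ hle0, hpq0, min_fold]
        · simp [tsize]; omega
        · rw [ihr _ _ _ hle0]; omega

theorem knn_search_build_size (K k : Nat) (data : List datapt) (query : datapt)
    (hK : 0 < K) (hdata : 0 < data.length) (hk : 0 < k)
    (hdim : ∀ v' ∈ data, v'.length = k) :
    (knn_search K k (build_kdtree k data) query).length = min K data.length := by
  rw [knn_search, ← build_size data.length k data 0 (le_refl _)]
  have := knn_len K k (build_kdtree k data) ⟨List.replicate k none, List.replicate k none⟩ query [] (by simp)
  simp only [build_kdtree] at this ⊢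
  rw [this]
  simp
end
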